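/- arXiv:2306.13998 — 2 statements merged into one kernel-verified Lean document; each statement's English description precedes it below -/
import Mathlib

section
/- Let γ > 0. There exist constants M(γ) > 0 and ρ(γ) > 0, independent of λ, such that for every λ ≥ γ² the solution (u, v) of the system u' = v, v' = -λ u - 2γ v satisfies |u(t)|² + λ⁻¹ |v(t)|² ≤ M(γ)² e^{-2ρ(γ) t} ( |u(0)|² + λ⁻¹ |v(0)|² ) for all t ≥ 0. -/
/-- Uniform exponential decay of the weighted energy, uniformly over `λ ≥ γ²`. -/
theorem stmt_7 (γ : ℝ) (hγ : 0 < γ) :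
    ∃ M > (0:ℝ), ∃ ρ > (0:ℝ),
      ∀ lam : ℝ, γ ^ 2 ≤ lam →
      ∀ u v : ℝ → ℝ,
        (∀ t ∈ Set.Ici (0:ℝ), HasDerivWithinAt u (v t) (Set.Ici 0) t) →
        (∀ t ∈ Set.Ici (0:ℝ),
          HasDerivWithinAt v (-lam * u t - 2 * γ * v t) (Set.Ici 0) t) →
        ∀ t ≥ (0:ℝ),
          (u t) ^ 2 + lam⁻¹ * (v t) ^ 2
            ≤ M ^ 2 * Real.exp (-2 * ρ * t) * ((u 0) ^ 2 + lam⁻¹ * (v 0) ^ 2) := by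
  refine ⟨2, by norm_num, γ/4, by positivity, ?_⟩
  intro lam hlam u v hu hv t ht
  have hlam0 : 0 < lam := lt_of_lt_of_le (by positivity) hlam
  -- Lyapunov function times exponential
  set g : ℝ → ℝ := fun s =>
    (lam * u s ^ 2 + v s ^ 2 + γ * (u s * v s)) * Real.exp (γ/2 * s) with hg
  have hgd : ∀ s ∈ Set.Ici (0:ℝ), HasDerivWithinAt g
      (((-(γ * lam) * u s ^ 2 - 3*γ * v s ^ 2 - 2*γ^2 * (u s * v s))
          + (γ/2) * (lam * u s ^ 2 + v s ^ 2 + γ * (u s * v s)))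
        * Real.exp (γ/2 * s)) (Set.Ici 0) s := by
    intro s hs
    have h1 := hu s hs
    have h2 := hv s hs
    have hW : HasDerivWithinAt (fun s => lam * u s ^ 2 + v s ^ 2 + γ * (u s * v s))
        (-(γ * lam) * u s ^ 2 - 3*γ * v s ^ 2 - 2*γ^2 * (u s * v s)) (Set.Ici 0) s := by
      have := (((h1.fun_pow 2).const_mul lam).add (h2.fun_pow 2)).add ((h1.fun_mul h2).const_mul γ)
      exact this.congr_deriv (by ring)
    have hE : HasDerivWithinAt (fun s => Real.exp (γ/2 * s))
        (Real.exp (γ/2 * s) * (γ/2)) (Set.Ici 0) s :=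
      (((hasDerivAt_id s).const_mul (γ/2)).exp.hasDerivWithinAt).congr_deriv (by
        simp [mul_comm])
    have := hW.fun_mul hE
    exact this.congr_deriv (by ring)
  -- derivative of `g` is nonpositive
  have hders : ∀ s ∈ Set.Ici (0:ℝ),
      (((-(γ * lam) * u s ^ 2 - 3*γ * v s ^ 2 - 2*γ^2 * (u s * v s))
          + (γ/2) * (lam * u s ^ 2 + v s ^ 2 + γ * (u s * v s)))
        * Real.exp (γ/2 * s)) ≤ 0 := by
    intro s _
    have hexp : 0 < Real.exp (γ/2 * s) := Real.exp_pos _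
    have hkey : ((-(γ * lam) * u s ^ 2 - 3*γ * v s ^ 2 - 2*γ^2 * (u s * v s))
          + (γ/2) * (lam * u s ^ 2 + v s ^ 2 + γ * (u s * v s))) ≤ 0 := by
      nlinarith [sq_nonneg (2*γ*(u s) + 3*(v s)), sq_nonneg (u s),
        mul_nonneg (mul_nonneg hγ.le (sub_nonneg.2 hlam)) (sq_nonneg (u s))]
    exact mul_nonpos_of_nonpos_of_nonneg hkey hexp.le
  have hanti : AntitoneOn g (Set.Ici 0) := by
    apply antitoneOn_of_hasDerivWithinAt_nonpos (convex_Ici 0)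
      (fun s hs => (hgd s hs).continuousWithinAt)
    · intro s hs
      rw [interior_Ici] at hs ⊢
      exact (hgd s (Set.mem_Ici.2 (le_of_lt hs))).mono Set.Ioi_subset_Ici_self
    · intro s hs
      rw [interior_Ici] at hs
      exact hders s (Set.mem_Ici.2 (le_of_lt hs))
  have hg0 : g t ≤ g 0 := hanti Set.self_mem_Ici ht ht
  have hexp0 : Real.exp (γ/2 * (0:ℝ)) = 1 := by norm_num
  have hexpt : 0 < Real.exp (γ/2 * t) := Real.exp_pos _
  -- unfold
  simp only [hg, hexp0, mul_one] at hg0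
  -- comparability of Lyapunov and energy
  have hlow : (lam * u t ^ 2 + v t ^ 2) / 2 ≤ lam * u t ^ 2 + v t ^ 2 + γ * (u t * v t) := by
    nlinarith [sq_nonneg (γ * u t + v t),
      mul_nonneg (sub_nonneg.2 hlam) (sq_nonneg (u t))]
  have hhigh : lam * u 0 ^ 2 + v 0 ^ 2 + γ * (u 0 * v 0)
      ≤ 3/2 * (lam * u 0 ^ 2 + v 0 ^ 2) := by
    nlinarith [sq_nonneg (γ * u 0 - v 0),
      mul_nonneg (sub_nonneg.2 hlam) (sq_nonneg (u 0))]
  -- conclude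
  have hexp_eq : Real.exp (γ/2 * t) * Real.exp (-2 * (γ/4) * t) = 1 := by
    rw [← Real.exp_add, show γ/2 * t + -2 * (γ/4) * t = 0 by ring, Real.exp_zero]
  have hE0 : (0:ℝ) ≤ lam * u 0 ^ 2 + v 0 ^ 2 := by positivity
  have hE : 0 < Real.exp (-2 * (γ/4) * t) := Real.exp_pos _
  have hEt : lam * u t ^ 2 + v t ^ 2
      ≤ 4 * Real.exp (-2 * (γ/4) * t) * (lam * u 0 ^ 2 + v 0 ^ 2) := by
    have h1 : (lam * u t ^ 2 + v t ^ 2) / 2 * Real.exp (γ/2 * t)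
        ≤ 3/2 * (lam * u 0 ^ 2 + v 0 ^ 2) := by
      calc (lam * u t ^ 2 + v t ^ 2) / 2 * Real.exp (γ/2 * t)
          ≤ (lam * u t ^ 2 + v t ^ 2 + γ * (u t * v t)) * Real.exp (γ/2 * t) :=
            mul_le_mul_of_nonneg_right hlow hexpt.le
        _ ≤ lam * u 0 ^ 2 + v 0 ^ 2 + γ * (u 0 * v 0) := hg0
        _ ≤ 3/2 * (lam * u 0 ^ 2 + v 0 ^ 2) := hhigh
    have h2 := mul_le_mul_of_nonneg_right h1 hE.le
    rw [mul_assoc, hexp_eq, mul_one] at h2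
    nlinarith [mul_nonneg hE.le hE0]
  calc u t ^ 2 + lam⁻¹ * v t ^ 2 = (lam * u t ^ 2 + v t ^ 2) / lam := by
        field_simp
    _ ≤ 4 * Real.exp (-2 * (γ/4) * t) * (lam * u 0 ^ 2 + v 0 ^ 2) / lam :=
        (div_le_div_iff_of_pos_right hlam0).mpr hEt
    _ = 2 ^ 2 * Real.exp (-2 * (γ/4) * t) * (u 0 ^ 2 + lam⁻¹ * v 0 ^ 2) := by
        field_simp; ring
end

section
/- Let γ > 0 and 0 < λ₁ ≤ λ ≤ γ². There exist constants M(γ, λ₁) > 0 and ρ(γ, λ₁) > 0, depending only on γ and λ₁, such that the solution (u, v) of u' = v, v' = -λ u - 2γ v satisfies |u(t)|² + λ⁻¹ |v(t)|² ≤ M(γ, λ₁)² e^{-2ρ(γ, λ₁) t} ( |u(0)|² + λ⁻¹ |v(0)|² ) for all t ≥ 0. -/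
lemma keyP (γ lam δ a b : ℝ) (hγ : 0 < γ) (hlam : 0 < lam) (hle : lam ≤ γ^2)
    (hδ1 : 2*γ*δ ≤ lam) (hδ2 : 2*δ ≤ γ) (hδ0 : 0 ≤ δ) :
    -2*lam*γ*a*b - 4*γ^2*b^2 + lam*b^2 - lam^2*a^2
      + (2*δ/3)*(lam*γ*a^2 + γ*b^2 + lam*a*b) ≤ 0 := by
  nlinarith [mul_nonneg hγ.le (sq_nonneg (lam*a + 2*γ*b)),
    mul_nonneg hδ0 (sq_nonneg (lam*a - 2*γ*b)),
    mul_nonneg (mul_nonneg (mul_nonneg hγ.le hlam.le) (sq_nonneg a))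
      (by linarith : (0:ℝ) ≤ lam - 2*γ*δ),
    mul_nonneg (sq_nonneg (lam*a)) (by linarith : (0:ℝ) ≤ γ - δ),
    mul_nonneg (mul_nonneg hγ.le (sq_nonneg b)) (by linarith : (0:ℝ) ≤ γ^2 - lam),
    mul_nonneg (sq_nonneg (γ*b)) (by linarith : (0:ℝ) ≤ 3*γ - 4*δ)]

lemma comp_low (γ lam a b : ℝ) (hγ : 0 < γ) (hlam : 0 < lam) (hle : lam ≤ γ^2) :
    a^2 + lam⁻¹*b^2 ≤ 2*(a^2 + lam⁻¹*b^2 + γ⁻¹*(a*b)) := by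
  have hc : 0 < lam*γ := mul_pos hlam hγ
  have key : 0 ≤ lam*γ*(2*(a^2 + lam⁻¹*b^2 + γ⁻¹*(a*b)) - (a^2 + lam⁻¹*b^2)) := by
    have e : lam*γ*(2*(a^2 + lam⁻¹*b^2 + γ⁻¹*(a*b)) - (a^2 + lam⁻¹*b^2))
        = lam*γ*a^2 + γ*b^2 + 2*lam*a*b := by
      field_simp; ring
    rw [e]
    nlinarith [sq_nonneg (lam*a + γ*b), mul_nonneg (sq_nonneg a)
      (by linarith : (0:ℝ) ≤ γ^2 - lam), mul_nonneg hlam.le (sq_nonneg a)]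
  nlinarith [key, hc]

lemma comp_high (γ lam a b : ℝ) (hγ : 0 < γ) (hlam : 0 < lam) (hle : lam ≤ γ^2) :
    a^2 + lam⁻¹*b^2 + γ⁻¹*(a*b) ≤ (3/2)*(a^2 + lam⁻¹*b^2) := by
  have hc : 0 < lam*γ := mul_pos hlam hγ
  have key : 0 ≤ lam*γ*((3/2)*(a^2 + lam⁻¹*b^2) - (a^2 + lam⁻¹*b^2 + γ⁻¹*(a*b))) := by
    have e : lam*γ*((3/2)*(a^2 + lam⁻¹*b^2) - (a^2 + lam⁻¹*b^2 + γ⁻¹*(a*b)))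
        = (lam*γ*a^2 + γ*b^2 - 2*lam*a*b)/2 := by
      field_simp; ring
    rw [e]
    nlinarith [sq_nonneg (lam*a - γ*b), mul_nonneg (sq_nonneg a)
      (by linarith : (0:ℝ) ≤ γ^2 - lam), mul_nonneg hlam.le (sq_nonneg a)]
  nlinarith [key, hc]

/-- Uniform exponential decay of the weighted energy over `λ₁ ≤ λ ≤ γ²`. -/
theorem stmt_8 (γ lam₁ : ℝ) (hγ : 0 < γ) (hlam₁ : 0 < lam₁) :
    ∃ M > (0:ℝ), ∃ ρ > (0:ℝ),
      ∀ lam : ℝ, lam₁ ≤ lam → lam ≤ γ ^ 2 →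
      ∀ u v : ℝ → ℝ,
        (∀ t ∈ Set.Ici (0:ℝ), HasDerivWithinAt u (v t) (Set.Ici 0) t) →
        (∀ t ∈ Set.Ici (0:ℝ),
          HasDerivWithinAt v (-lam * u t - 2 * γ * v t) (Set.Ici 0) t) →
        ∀ t ≥ (0:ℝ),
          (u t) ^ 2 + lam⁻¹ * (v t) ^ 2
            ≤ M ^ 2 * Real.exp (-2 * ρ * t) * ((u 0) ^ 2 + lam⁻¹ * (v 0) ^ 2) := by
  set δ : ℝ := min (lam₁/(2*γ)) (γ/2) with hδdef
  have hδ0 : 0 < δ := lt_min (by positivity) (by positivity)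
  refine ⟨2, by norm_num, δ/3, by positivity, ?_⟩
  intro lam hl1 hl2 u v hu hv t ht
  have hlam : 0 < lam := lt_of_lt_of_le hlam₁ hl1
  have hδ1 : 2*γ*δ ≤ lam := by
    have : δ ≤ lam₁/(2*γ) := min_le_left _ _
    have h2γ : (0:ℝ) < 2*γ := by positivity
    calc 2*γ*δ ≤ 2*γ*(lam₁/(2*γ)) := by nlinarith
    _ = lam₁ := by field_simp
    _ ≤ lam := hl1
  have hδ2 : 2*δ ≤ γ := by
    have : δ ≤ γ/2 := min_le_right _ _
    linarith
  set ρ : ℝ := δ/3 with hρdef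
  set V : ℝ → ℝ := fun s => u s ^ 2 + lam⁻¹ * v s ^ 2 + γ⁻¹ * (u s * v s) with hVdef
  set W : ℝ → ℝ := fun s => V s * Real.exp (2*ρ*s) with hWdef
  -- continuity
  have hucont : ContinuousOn u (Set.Ici 0) := fun s hs => (hu s hs).continuousWithinAt
  have hvcont : ContinuousOn v (Set.Ici 0) := fun s hs => (hv s hs).continuousWithinAt
  have hVcont : ContinuousOn V (Set.Ici 0) :=
    ((hucont.pow 2).add (continuousOn_const.mul (hvcont.pow 2))).add
      (continuousOn_const.mul (hucont.mul hvcont))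
  have hWcont : ContinuousOn W (Set.Ici 0) :=
    hVcont.mul ((Real.continuous_exp.comp (continuous_const.mul continuous_id)).continuousOn)
  -- derivative of W at interior points
  have hWderiv : ∀ x ∈ Set.Ioi (0:ℝ), HasDerivAt W
      ((2 * u x * v x + lam⁻¹ * (2 * v x * (-lam * u x - 2*γ*v x))
        + γ⁻¹ * (v x * v x + u x * (-lam * u x - 2*γ*v x))
        + 2*ρ*V x) * Real.exp (2*ρ*x)) x := by
    intro x hx
    have hmem : Set.Ici (0:ℝ) ∈ nhds x := Ici_mem_nhds hx
    have hux : HasDerivAt u (v x) x := (hu x (Set.mem_Ici.mpr (le_of_lt (Set.mem_Ioi.mp hx)))).hasDerivAt hmem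
    have hvx : HasDerivAt v (-lam * u x - 2*γ*v x) x := (hv x (Set.mem_Ici.mpr (le_of_lt (Set.mem_Ioi.mp hx)))).hasDerivAt hmem
    have hVx : HasDerivAt V (2 * u x * v x + lam⁻¹ * (2 * v x * (-lam * u x - 2*γ*v x))
        + γ⁻¹ * (v x * v x + u x * (-lam * u x - 2*γ*v x))) x := by
      have h1 := hux.pow 2
      have h2 := (hvx.pow 2).const_mul lam⁻¹
      have h3 := (hux.mul hvx).const_mul γ⁻¹
      have := (h1.add h2).add h3
      refine this.congr_deriv ?_
      push_cast
      ring
    have hex : HasDerivAt (fun s : ℝ => Real.exp (2*ρ*s)) (Real.exp (2*ρ*x) * (2*ρ)) x := by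
      simpa using ((hasDerivAt_id x).const_mul (2*ρ)).exp
    have := hVx.mul hex
    refine this.congr_deriv ?_
    ring
  have hWanti : AntitoneOn W (Set.Ici 0) := by
    apply antitoneOn_of_deriv_nonpos (convex_Ici 0) hWcont
    · intro x hx
      rw [interior_Ici] at hx
      exact (hWderiv x hx).differentiableAt.differentiableWithinAt
    · intro x hx
      rw [interior_Ici] at hx
      rw [(hWderiv x hx).deriv]
      have hc : 0 < lam*γ := mul_pos hlam hγ
      have hkey : 2 * u x * v x + lam⁻¹ * (2 * v x * (-lam * u x - 2*γ*v x))
          + γ⁻¹ * (v x * v x + u x * (-lam * u x - 2*γ*v x)) + 2*ρ*V x ≤ 0 := by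
        have hP := keyP γ lam δ (u x) (v x) hγ hlam hl2 hδ1 hδ2 hδ0.le
        have e : lam*γ*(2 * u x * v x + lam⁻¹ * (2 * v x * (-lam * u x - 2*γ*v x))
            + γ⁻¹ * (v x * v x + u x * (-lam * u x - 2*γ*v x)) + 2*ρ*V x)
            = -2*lam*γ*(u x)*(v x) - 4*γ^2*(v x)^2 + lam*(v x)^2 - lam^2*(u x)^2
              + (2*δ/3)*(lam*γ*(u x)^2 + γ*(v x)^2 + lam*(u x)*(v x)) := by
          simp only [hVdef, hρdef]
          field_simp
          ring
        nlinarith [hP, e, hc]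
      have hexpos : (0:ℝ) ≤ Real.exp (2*ρ*x) := (Real.exp_pos _).le
      exact mul_nonpos_of_nonpos_of_nonneg hkey hexpos
  -- conclude
  have hWle : W t ≤ W 0 := hWanti (Set.mem_Ici.mpr le_rfl) ht ht
  have hexppos : (0:ℝ) < Real.exp (2*ρ*t) := Real.exp_pos _
  have hW0 : W 0 = V 0 := by simp [hWdef]
  have hVt : V t ≤ Real.exp (-2*ρ*t) * V 0 := by
    have h1 : V t * Real.exp (2*ρ*t) ≤ V 0 := by rw [← hW0]; exact hWle
    have h2 : Real.exp (-2*ρ*t) * Real.exp (2*ρ*t) = 1 := by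
      rw [← Real.exp_add]; norm_num
    have h3 : V t * Real.exp (2*ρ*t) * Real.exp (-2*ρ*t) = V t := by
      rw [mul_assoc, mul_comm (Real.exp (2*ρ*t)), h2, mul_one]
    have h4 := mul_le_mul_of_nonneg_right h1 (Real.exp_pos (-2*ρ*t)).le
    rw [h3] at h4
    linarith
  have hlow := comp_low γ lam (u t) (v t) hγ hlam hl2
  have hhigh := comp_high γ lam (u 0) (v 0) hγ hlam hl2
  have hE0 : (0:ℝ) ≤ (u 0)^2 + lam⁻¹*(v 0)^2 := by positivity
  have hexp2 : (0:ℝ) < Real.exp (-2*ρ*t) := Real.exp_pos _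
  have hgoal : Real.exp (-2 * (δ/3) * t) = Real.exp (-2*ρ*t) := by rw [hρdef]
  calc (u t)^2 + lam⁻¹*(v t)^2 ≤ 2 * V t := hlow
  _ ≤ 2 * (Real.exp (-2*ρ*t) * V 0) := by linarith
  _ ≤ 2 * (Real.exp (-2*ρ*t) * ((3/2)*((u 0)^2 + lam⁻¹*(v 0)^2))) := by
      have := mul_le_mul_of_nonneg_left hhigh hexp2.le
      linarith
  _ ≤ 2^2 * Real.exp (-2*(δ/3)*t) * ((u 0)^2 + lam⁻¹*(v 0)^2) := by
      rw [hgoal]; nlinarith [mul_nonneg hexp2.le hE0]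
end
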